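/- arXiv:2008.00240 — 5 statements merged into one kernel-verified Lean document; each statement's English description precedes it below -/
import Mathlib

section
/- For every real α with sin(α) ≠ 0 (i.e. α not an integer multiple of π), the series ∑_{k=1}^{∞} |sin(kα)|/k diverges. -/
theorem stmt_4 (α : ℝ) (h : Real.sin α ≠ 0) :
    ¬ Summable (fun k : ℕ => |Real.sin (k * α)| / k) := by
  intro hs
  set f : ℕ → ℝ := fun k : ℕ => |Real.sin (k * α)| / k with hf
  set c : ℝ := |Real.sin α| with hc
  have c_pos : 0 < c := abs_pos.mpr h
  have h1 : Summable (fun k : ℕ => f (2 * k)) :=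
    hs.comp_injective (fun a b hab => by omega)
  have h2 : Summable (fun k : ℕ => f (2 * k + 1)) :=
    hs.comp_injective (fun a b hab => by omega)
  have hsum : Summable (fun k : ℕ => f (2 * k) + f (2 * k + 1)) := h1.add h2
  have key : ∀ k : ℕ, c / (2 * (k : ℝ) + 1) ≤ f (2 * k) + f (2 * k + 1) := by
    intro k
    have hA : (0 : ℝ) ≤ |Real.sin (((2 * k : ℕ) : ℝ) * α)| := abs_nonneg _
    have hB : (0 : ℝ) ≤ |Real.sin (((2 * k + 1 : ℕ) : ℝ) * α)| := abs_nonneg _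
    have hsin : c ≤ |Real.sin (((2 * k : ℕ) : ℝ) * α)| +
        |Real.sin (((2 * k + 1 : ℕ) : ℝ) * α)| := by
      have esin : Real.sin α = Real.sin (((2*k+1:ℕ):ℝ)*α) * Real.cos (((2*k:ℕ):ℝ)*α)
          - Real.cos (((2*k+1:ℕ):ℝ)*α) * Real.sin (((2*k:ℕ):ℝ)*α) := by
        rw [← Real.sin_sub]; congr 1; push_cast; ring
      rw [hc, esin]
      calc |Real.sin (((2*k+1:ℕ):ℝ)*α) * Real.cos (((2*k:ℕ):ℝ)*α)
            - Real.cos (((2*k+1:ℕ):ℝ)*α) * Real.sin (((2*k:ℕ):ℝ)*α)|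
          ≤ |Real.sin (((2*k+1:ℕ):ℝ)*α) * Real.cos (((2*k:ℕ):ℝ)*α)| +
            |Real.cos (((2*k+1:ℕ):ℝ)*α) * Real.sin (((2*k:ℕ):ℝ)*α)| := abs_sub _ _
        _ ≤ |Real.sin (((2*k:ℕ):ℝ)*α)| + |Real.sin (((2*k+1:ℕ):ℝ)*α)| := by
            rw [abs_mul, abs_mul]
            have c1 : |Real.cos (((2*k:ℕ):ℝ)*α)| ≤ 1 := Real.abs_cos_le_one _
            have c2 : |Real.cos (((2*k+1:ℕ):ℝ)*α)| ≤ 1 := Real.abs_cos_le_one _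
            nlinarith [abs_nonneg (Real.sin (((2*k:ℕ):ℝ)*α)),
              abs_nonneg (Real.sin (((2*k+1:ℕ):ℝ)*α))]
    have hden : (0 : ℝ) < 2 * (k : ℝ) + 1 := by positivity
    have e1 : f (2 * k) = |Real.sin (((2 * k : ℕ) : ℝ) * α)| / ((2 * k : ℕ) : ℝ) := rfl
    have e2 : f (2 * k + 1) =
        |Real.sin (((2 * k + 1 : ℕ) : ℝ) * α)| / ((2 * k + 1 : ℕ) : ℝ) := rfl
    rw [e1, e2]
    have step1 : |Real.sin (((2 * k : ℕ) : ℝ) * α)| / (2 * (k : ℝ) + 1)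
        ≤ |Real.sin (((2 * k : ℕ) : ℝ) * α)| / ((2 * k : ℕ) : ℝ) := by
      rcases Nat.eq_zero_or_pos k with hk | hk
      · subst hk; simp
      · apply div_le_div_of_nonneg_left hA
        · positivity
        · push_cast; linarith
    have step2 : |Real.sin (((2 * k + 1 : ℕ) : ℝ) * α)| / (2 * (k : ℝ) + 1)
        ≤ |Real.sin (((2 * k + 1 : ℕ) : ℝ) * α)| / ((2 * k + 1 : ℕ) : ℝ) := by
      apply le_of_eq; congr 1; push_cast; ring
    have step0 : c / (2 * (k : ℝ) + 1)
        ≤ (|Real.sin (((2 * k : ℕ) : ℝ) * α)| + |Real.sin (((2 * k + 1 : ℕ) : ℝ) * α)|)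
            / (2 * (k : ℝ) + 1) := by
      gcongr
    calc c / (2 * (k : ℝ) + 1)
        ≤ (|Real.sin (((2 * k : ℕ) : ℝ) * α)| + |Real.sin (((2 * k + 1 : ℕ) : ℝ) * α)|)
            / (2 * (k : ℝ) + 1) := step0
      _ = |Real.sin (((2 * k : ℕ) : ℝ) * α)| / (2 * (k : ℝ) + 1)
            + |Real.sin (((2 * k + 1 : ℕ) : ℝ) * α)| / (2 * (k : ℝ) + 1) := add_div _ _ _
      _ ≤ _ := add_le_add step1 step2
  have hc1 : Summable (fun k : ℕ => c / (2 * (k : ℝ) + 1)) := by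
    apply Summable.of_nonneg_of_le (fun k => by positivity) key hsum
  have hc2 : Summable (fun k : ℕ => (2 * (k : ℝ) + 1)⁻¹) := by
    have := hc1.mul_left c⁻¹
    refine this.congr fun k => ?_
    field_simp
  have hc3 : Summable (fun k : ℕ => (3 : ℝ)⁻¹ * ((k : ℝ) + 1)⁻¹) := by
    apply Summable.of_nonneg_of_le (fun k => by positivity) (fun k => ?_) hc2
    rw [← mul_inv]
    apply inv_anti₀ (by positivity)
    have := Nat.cast_nonneg (α := ℝ) k
    linarith
  have hc4 : Summable (fun k : ℕ => ((k : ℝ) + 1)⁻¹) := by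
    have := hc3.mul_left (3 : ℝ)
    refine this.congr fun k => ?_
    field_simp
  have hc5 : Summable (fun k : ℕ => ((k : ℝ))⁻¹) := by
    rw [← summable_nat_add_iff 1]
    refine hc4.congr fun k => ?_
    push_cast
    ring
  exact Real.not_summable_natCast_inv hc5
end

section
/- Let 0 < m < n be integers, let t_k = (2k−1)π/(2n) and x_k = cos t_k for k = 1,…,n. Define Φ_{n,k}^m(x) = (π/n) ∑_{j=0}^{n+m−1} μ_{n,j}^m p_j(w₁,x) p_j(w₁,x_k), where μ_{n,j}^m = 1 for 0 ≤ j ≤ n−m and μ_{n,j}^m = (n+m−j)/(2m) for n−m < j < n+m. Then for t ∈ [0,π] with t ∉ {t_1,…,t_n} and x = cos t, Φ_{n,k}^m(x) = ((−1)^k/(4mn)) cos(nt) · ( sin(m(t−t_k))/sin²((t−t_k)/2) − sin(m(t+t_k))/sin²((t+t_k)/2) ). -/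
open Real

/-- Orthonormal Chebyshev polynomials of the first kind, as functions on `[-1,1]`:
`p₀ = 1/√π`, `p_j(cos t) = √(2/π) cos(jt)` for `j ≥ 1`. -/
noncomputable def chebP1 (j : ℕ) (x : ℝ) : ℝ :=
  if j = 0 then 1 / Real.sqrt π else Real.sqrt (2 / π) * Real.cos (j * Real.arccos x)

/-- The de la Vallée Poussin filter. -/
noncomputable def vpFilter (n m j : ℕ) : ℝ :=
  if j + m ≤ n then 1 else ((n : ℝ) + m - j) / (2 * m)

/-- Chebyshev nodes of the first kind: `t_k = (2k-1)π/(2n)`. -/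
noncomputable def chebNode1 (n k : ℕ) : ℝ := (2 * (k : ℝ) - 1) * π / (2 * n)

/-- Fundamental VP polynomials for `w₁`. -/
noncomputable def vpPhi1 (n m k : ℕ) (x : ℝ) : ℝ :=
  (π / n) * ∑ j ∈ Finset.range (n + m),
    vpFilter n m j * chebP1 j x * chebP1 j (Real.cos (chebNode1 n k))


noncomputable def Esum (l : ℕ) (u : ℝ) : ℝ := 1/2 + ∑ j ∈ Finset.Ico 1 (l+1), Real.cos (j * u)

lemma esum_mul (u : ℝ) (l : ℕ) :
    2*(1 - Real.cos u) * Esum l u = Real.cos (l*u) - Real.cos (((l:ℝ)+1)*u) := by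
  induction l with
  | zero => simp [Esum]; ring
  | succ l ih =>
    rw [Esum, Finset.sum_Ico_succ_top (by omega)]
    rw [Esum] at ih
    have e1 : ((l:ℝ)+1+1)*u = ((l:ℝ)+1)*u + u := by ring
    have e2 : (l:ℝ)*u = ((l:ℝ)+1)*u - u := by ring
    rw [e2, Real.cos_sub] at ih
    push_cast
    rw [e1, Real.cos_add]
    push_cast at ih
    linear_combination ih

lemma vp_step (n m : ℕ) (hmn : m + 1 ≤ n) (u : ℝ) :
    4*((m:ℝ)+1)*(1/2 + ∑ j ∈ Finset.Ico 1 (n+(m+1)+1), vpFilter n (m+1) j * Real.cos (j*u))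
    = 4*(m:ℝ)*(1/2 + ∑ j ∈ Finset.Ico 1 (n+m+1), vpFilter n m j * Real.cos (j*u))
      + 2*Esum (n-(m+1)) u + 2*Esum (n+m) u := by
  have htop : vpFilter n (m+1) (n+m+1) = 0 := by
    rw [vpFilter, if_neg (by omega)]
    push_cast
    ring
  have h1 : ∑ j ∈ Finset.Ico 1 (n+(m+1)+1), vpFilter n (m+1) j * Real.cos (j*u)
      = ∑ j ∈ Finset.Ico 1 (n+m+1), vpFilter n (m+1) j * Real.cos (j*u) := by
    rw [show n+(m+1)+1 = (n+m+1)+1 by omega, Finset.sum_Ico_succ_top (by omega), htop]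
    ring
  have h2 : ∑ j ∈ Finset.Ico 1 (n-(m+1)+1), Real.cos (j*u)
      = ∑ j ∈ Finset.Ico 1 (n+m+1), (if j + (m+1) ≤ n then Real.cos (j*u) else 0) := by
    have e1 : ∑ j ∈ Finset.Ico 1 (n-(m+1)+1), (if j + (m+1) ≤ n then Real.cos (j*u) else 0)
        = ∑ j ∈ Finset.Ico 1 (n+m+1), (if j + (m+1) ≤ n then Real.cos (j*u) else 0) :=
      Finset.sum_subset (Finset.Ico_subset_Ico le_rfl (by omega)) (fun x hx hnx => by
        simp only [Finset.mem_Ico] at hx hnx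
        rw [if_neg (by omega)])
    rw [← e1]
    apply Finset.sum_congr rfl
    intro x hx
    simp only [Finset.mem_Ico] at hx
    rw [if_pos (by omega)]
  rw [Esum, Esum, h1, h2]
  have key : ∑ j ∈ Finset.Ico 1 (n+m+1), (4*((m:ℝ)+1) * (vpFilter n (m+1) j * Real.cos (j*u)))
      = ∑ j ∈ Finset.Ico 1 (n+m+1),
        (4*(m:ℝ) * (vpFilter n m j * Real.cos (j*u))
          + 2*(if j + (m+1) ≤ n then Real.cos (j*u) else 0) + 2*Real.cos (j*u)) := by
    apply Finset.sum_congr rfl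
    intro j hj
    simp only [Finset.mem_Ico] at hj
    by_cases hc1 : j + (m+1) ≤ n
    · rw [vpFilter, if_pos hc1, vpFilter, if_pos (by omega), if_pos hc1]
      ring
    · by_cases hc2 : j + m ≤ n
      · have hje : j + m = n := by omega
        rw [vpFilter, if_neg hc1, vpFilter, if_pos hc2, if_neg hc1]
        have hjr : (j:ℝ) + m = n := by exact_mod_cast congrArg (Nat.cast : ℕ → ℝ) hje
        have hm1 : ((m:ℝ)+1) ≠ 0 := by positivity
        push_cast
        field_simp
        linear_combination (-4*Real.cos ((j:ℝ)*u)) * hjr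
      · have hm0 : 1 ≤ m := by omega
        rw [vpFilter, if_neg hc1, vpFilter, if_neg hc2, if_neg hc1]
        have hmr : (m:ℝ) ≠ 0 := by
          exact Nat.cast_ne_zero.mpr (by omega)
        have hm1 : (m:ℝ) + 1 ≠ 0 := by positivity
        push_cast
        field_simp
        ring
  rw [Finset.sum_add_distrib, Finset.sum_add_distrib, ← Finset.mul_sum, ← Finset.mul_sum,
    ← Finset.mul_sum, ← Finset.mul_sum] at key
  rw [show n+m+1 = (n+m)+1 from rfl]
  linarith [key]

lemma kernelK (n : ℕ) : ∀ m : ℕ, m ≤ n → ∀ u : ℝ,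
    4*(m:ℝ)*(1 - Real.cos u) * (1/2 + ∑ j ∈ Finset.Ico 1 (n+m+1), vpFilter n m j * Real.cos (j*u))
    = Real.cos (((n:ℝ)-m)*u) - Real.cos (((n:ℝ)+m)*u) := by
  intro m
  induction m with
  | zero => intro _ u; norm_num
  | succ m ih =>
    intro hm1 u
    have hK := ih (by omega) u
    have hstep := vp_step n m hm1 u
    have e1 := esum_mul u (n-(m+1))
    have e2 := esum_mul u (n+m)
    have c1 : ((n-(m+1):ℕ):ℝ) = (n:ℝ) - ((m:ℝ)+1) := by
      rw [Nat.cast_sub hm1]; push_cast; ring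
    rw [c1, show (n:ℝ) - ((m:ℝ)+1) + 1 = (n:ℝ) - m by ring] at e1
    push_cast at e2 ⊢
    rw [show ((n:ℝ) + ↑m + 1) = ((n:ℝ) + (↑m + 1)) from by ring] at e2
    linear_combination (1 - Real.cos u) * hstep + hK + e1 + e2

lemma kernel_closed (n m : ℕ) (hm : 0 < m) (hmn : m ≤ n) (u : ℝ) (hu : Real.sin (u/2) ≠ 0) :
    (1/2 + ∑ j ∈ Finset.Ico 1 (n+m+1), vpFilter n m j * Real.cos (j*u))
    = Real.sin ((m:ℝ)*u) * Real.sin ((n:ℝ)*u) / (4*m*Real.sin (u/2)^2) := by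
  have hK := kernelK n m hmn u
  have h1 : 1 - Real.cos u = 2 * Real.sin (u/2)^2 := by
    have h2 := Real.sin_sq_add_cos_sq (u/2)
    have h3 := Real.cos_two_mul (u/2)
    rw [show 2*(u/2) = u by ring] at h3
    nlinarith
  have h2 : Real.cos (((n:ℝ)-m)*u) - Real.cos (((n:ℝ)+m)*u)
      = 2*Real.sin ((n:ℝ)*u)*Real.sin ((m:ℝ)*u) := by
    rw [show ((n:ℝ)-m)*u = (n:ℝ)*u - (m:ℝ)*u by ring,
      show ((n:ℝ)+m)*u = (n:ℝ)*u + (m:ℝ)*u by ring, Real.cos_sub, Real.cos_add]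
    ring
  rw [h1, h2] at hK
  have hm' : (m:ℝ) ≠ 0 := Nat.cast_ne_zero.mpr hm.ne'
  have hs2 : Real.sin (u/2)^2 ≠ 0 := pow_ne_zero _ hu
  field_simp
  rw [mul_comm u (m:ℝ), mul_comm u (n:ℝ)]
  linear_combination hK

/-- compact trigonometric form of the fundamental VP polynomials for `w₁`. -/
theorem stmt_9 (m n : ℕ) (hm : 0 < m) (hmn : m < n)
    (k : ℕ) (hk1 : 1 ≤ k) (hkn : k ≤ n)
    (t : ℝ) (ht : t ∈ Set.Icc 0 π)
    (htk : ∀ k' : ℕ, 1 ≤ k' → k' ≤ n → t ≠ chebNode1 n k') :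
    vpPhi1 n m k (Real.cos t) =
      ((-1 : ℝ) ^ k / (4 * m * n)) * Real.cos (n * t) *
        (Real.sin (m * (t - chebNode1 n k)) / Real.sin ((t - chebNode1 n k) / 2) ^ 2
          - Real.sin (m * (t + chebNode1 n k)) / Real.sin ((t + chebNode1 n k) / 2) ^ 2) := by
  obtain ⟨ht0, htπ⟩ := ht
  have hπ := Real.pi_pos
  have hn0 : (0:ℝ) < n := by exact_mod_cast (by omega : 0 < n)
  have hk1' : (1:ℝ) ≤ (k:ℝ) := by exact_mod_cast hk1
  have hkn' : (k:ℝ) ≤ (n:ℝ) := by exact_mod_cast hkn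
  set θ := chebNode1 n k with hθdef
  have hθ0 : 0 < θ := by
    rw [hθdef, chebNode1]
    apply div_pos (by nlinarith) (by positivity)
  have hθπ : θ < π := by
    rw [hθdef, chebNode1, div_lt_iff₀ (by positivity)]
    nlinarith
  have harct : Real.arccos (Real.cos t) = t := Real.arccos_cos ht0 htπ
  have harcθ : Real.arccos (Real.cos θ) = θ := Real.arccos_cos hθ0.le hθπ.le
  have htne : t ≠ θ := htk k hk1 hkn
  have hsm : Real.sin ((t-θ)/2) ≠ 0 := by
    intro h
    rw [Real.sin_eq_zero_iff_of_lt_of_lt (by linarith) (by linarith)] at h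
    exact htne (by linarith)
  have hsp : Real.sin ((t+θ)/2) ≠ 0 :=
    ne_of_gt (Real.sin_pos_of_pos_of_lt_pi (by linarith) (by linarith))
  -- reduce the sum
  have hF0 : vpFilter n m 0 * chebP1 0 (Real.cos t) * chebP1 0 (Real.cos θ) = 1/π := by
    have e1 : chebP1 0 (Real.cos t) = 1/Real.sqrt π := by rw [chebP1, if_pos rfl]
    have e2 : chebP1 0 (Real.cos θ) = 1/Real.sqrt π := by rw [chebP1, if_pos rfl]
    rw [vpFilter, if_pos (by omega), e1, e2, one_mul, div_mul_div_comm, one_mul,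
      Real.mul_self_sqrt hπ.le]
  have hFtop : vpFilter n m (n+m) * chebP1 (n+m) (Real.cos t) * chebP1 (n+m) (Real.cos θ) = 0 := by
    have : vpFilter n m (n+m) = 0 := by
      rw [vpFilter, if_neg (by omega)]
      push_cast
      ring
    rw [this, zero_mul, zero_mul]
  have hterm : ∀ j ∈ Finset.Ico 1 (n+m+1),
      vpFilter n m j * chebP1 j (Real.cos t) * chebP1 j (Real.cos θ)
      = (1/π) * (vpFilter n m j * Real.cos (j*(t-θ)) + vpFilter n m j * Real.cos (j*(t+θ))) := by
    intro j hj
    simp only [Finset.mem_Ico] at hj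
    have hj0 : j ≠ 0 := by omega
    rw [chebP1, if_neg hj0, chebP1, if_neg hj0, harct, harcθ]
    rw [show (j:ℝ)*(t-θ) = (j:ℝ)*t - (j:ℝ)*θ by ring,
      show (j:ℝ)*(t+θ) = (j:ℝ)*t + (j:ℝ)*θ by ring, Real.cos_sub, Real.cos_add]
    have hsq : Real.sqrt (2/π) * Real.sqrt (2/π) = 2/π := Real.mul_self_sqrt (by positivity)
    linear_combination (vpFilter n m j * Real.cos ((j:ℝ)*t) * Real.cos ((j:ℝ)*θ)) * hsq
  have hsplit : ∑ j ∈ Finset.range (n+m),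
      vpFilter n m j * chebP1 j (Real.cos t) * chebP1 j (Real.cos θ)
      = (1/π) * ((1/2 + ∑ j ∈ Finset.Ico 1 (n+m+1), vpFilter n m j * Real.cos (j*(t-θ)))
               + (1/2 + ∑ j ∈ Finset.Ico 1 (n+m+1), vpFilter n m j * Real.cos (j*(t+θ)))) := by
    rw [Finset.sum_range_eq_add_Ico _ (by omega), hF0]
    have hext : ∑ j ∈ Finset.Ico 1 (n+m+1),
        vpFilter n m j * chebP1 j (Real.cos t) * chebP1 j (Real.cos θ)
        = ∑ j ∈ Finset.Ico 1 (n+m),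
        vpFilter n m j * chebP1 j (Real.cos t) * chebP1 j (Real.cos θ) := by
      rw [Finset.sum_Ico_succ_top (by omega), hFtop, add_zero]
    rw [← hext, Finset.sum_congr rfl hterm, ← Finset.mul_sum, Finset.sum_add_distrib]
    ring
  have hK1 := kernel_closed n m hm hmn.le (t-θ) hsm
  have hK2 := kernel_closed n m hm hmn.le (t+θ) hsp
  have hnθ : (n:ℝ)*θ = (k:ℝ)*π - π/2 := by
    rw [hθdef, chebNode1]
    field_simp
  have hsub : Real.sin ((n:ℝ)*(t-θ)) = (-1:ℝ)^k * Real.cos ((n:ℝ)*t) := by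
    rw [mul_sub, hnθ, show (n:ℝ)*t - ((k:ℝ)*π - π/2) = (n:ℝ)*t - ((k:ℝ)*π - π/2) from rfl,
      Real.sin_sub, Real.cos_nat_mul_pi_sub, Real.sin_nat_mul_pi_sub,
      Real.sin_pi_div_two, Real.cos_pi_div_two]
    ring
  have hadd : Real.sin ((n:ℝ)*(t+θ)) = -(-1:ℝ)^k * Real.cos ((n:ℝ)*t) := by
    rw [mul_add, hnθ, show (n:ℝ)*t + ((k:ℝ)*π - π/2) = ((k:ℝ)*π - π/2) + (n:ℝ)*t by ring,
      Real.sin_add, Real.cos_nat_mul_pi_sub, Real.sin_nat_mul_pi_sub,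
      Real.sin_pi_div_two, Real.cos_pi_div_two]
    ring
  rw [vpPhi1, ← hθdef, hsplit, hK1, hK2, hsub, hadd]
  have hm0 : (m:ℝ) ≠ 0 := Nat.cast_ne_zero.mpr hm.ne'
  field_simp
  ring
end

section
/- Let 0 < m < n, let x_1,…,x_n be the zeros of the n-th Chebyshev polynomial of the first kind, and let Φ_{n,k}^m(x) = (π/n) ∑_{j=0}^{n+m−1} μ_{n,j}^m p_j(w₁,x) p_j(w₁,x_k) with the de la Vallée Poussin filter μ_{n,j}^m. Then Φ_{n,k}^m(x_h) = δ_{k,h} for all h,k = 1,…,n; i.e. the fundamental VP polynomials interpolate like the Lagrange fundamental polynomials. -/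
open Real

section VPaux

lemma sum_two_sin_cos (θ : ℝ) (N : ℕ) :
    ∑ j ∈ Finset.range N, 2 * Real.sin (θ/2) * Real.cos (j * θ)
      = Real.sin ((N : ℝ) * θ - θ/2) + Real.sin (θ/2) := by
  have h := Finset.sum_range_sub (f := fun j => Real.sin ((j : ℝ) * θ - θ/2)) N
  have h2 : ∑ j ∈ Finset.range N, 2 * Real.sin (θ/2) * Real.cos (j * θ)
      = ∑ j ∈ Finset.range N,
        (Real.sin (((j : ℕ) + 1 : ℕ) * θ - θ/2) - Real.sin ((j : ℝ) * θ - θ/2)) := by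
    refine Finset.sum_congr rfl fun j _ => ?_
    push_cast
    have h1 : ((j : ℝ) + 1) * θ - θ/2 = (j : ℝ) * θ + θ/2 := by ring
    rw [h1, Real.sin_add, Real.sin_sub]
    ring
  rw [h2, h, show ((0:ℕ):ℝ) * θ - θ/2 = -(θ/2) by push_cast; ring, Real.sin_neg]
  ring



lemma mu_indicator (n m j : ℕ) (hm : 0 < m) (hmn : m < n) (hj : j < n + m) :
    vpFilter n m j
      = (1/(2*(m:ℝ))) * ∑ l ∈ Finset.Ico (n+1-m) (n+m+1), (if j < l then (1:ℝ) else 0) := by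
  have hm' : (m : ℝ) ≠ 0 := Nat.cast_ne_zero.mpr hm.ne'
  by_cases hc : j + m ≤ n
  · have hall : ∀ l ∈ Finset.Ico (n+1-m) (n+m+1), (if j < l then (1:ℝ) else 0) = 1 := by
      intro l hl
      rw [Finset.mem_Ico] at hl
      have : j < l := by omega
      simp [this]
    rw [Finset.sum_congr rfl hall, Finset.sum_const, Nat.card_Ico,
      show n + m + 1 - (n + 1 - m) = 2 * m by omega]
    simp [vpFilter, hc]
    field_simp
  · have h1 : n + 1 - m ≤ j + 1 := by omega
    have h2 : j + 1 ≤ n + m + 1 := by omega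
    rw [← Finset.sum_Ico_consecutive _ h1 h2]
    have hz : ∀ l ∈ Finset.Ico (n+1-m) (j+1), (if j < l then (1:ℝ) else 0) = 0 := by
      intro l hl; rw [Finset.mem_Ico] at hl
      have : ¬ j < l := by omega
      simp [this]
    have ho : ∀ l ∈ Finset.Ico (j+1) (n+m+1), (if j < l then (1:ℝ) else 0) = 1 := by
      intro l hl; rw [Finset.mem_Ico] at hl
      have : j < l := by omega
      simp [this]
    rw [Finset.sum_congr rfl hz, Finset.sum_congr rfl ho, Finset.sum_const, Nat.card_Ico]
    have hcast : ((n + m + 1 - (j+1) : ℕ) : ℝ) = (n:ℝ) + m - j := by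
      have : j ≤ n + m := hj.le
      rw [Nat.cast_sub (by omega : j + 1 ≤ n + m + 1)]
      push_cast; ring
    simp only [vpFilter, if_neg hc, nsmul_eq_mul, mul_one, smul_zero, zero_add]
    rw [Finset.sum_const, Nat.card_Ico, nsmul_eq_mul, mul_one, hcast]
    field_simp

lemma inner_cos_sum (θ : ℝ) (N l : ℕ) (hl : l ≤ N) :
    ∑ j ∈ Finset.range N, (if j < l then (1:ℝ) else 0) * Real.cos (j * θ)
      = ∑ j ∈ Finset.range l, Real.cos (j * θ) := by
  rw [← Finset.sum_range_add_sum_Ico _ hl]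
  have h1 : ∀ j ∈ Finset.range l, (if j < l then (1:ℝ) else 0) * Real.cos (j * θ)
      = Real.cos (j * θ) := by
    intro j hj; rw [Finset.mem_range] at hj; simp [hj]
  have h2 : ∀ j ∈ Finset.Ico l N, (if j < l then (1:ℝ) else 0) * Real.cos (j * θ) = 0 := by
    intro j hj; rw [Finset.mem_Ico] at hj
    have : ¬ j < l := by omega
    simp [this]
  rw [Finset.sum_congr rfl h1, Finset.sum_congr rfl h2, Finset.sum_const_zero, add_zero]

lemma sum_cast_range (N : ℕ) : ∑ i ∈ Finset.range N, (i : ℝ) = N * (N - 1) / 2 := by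
  induction N with
  | zero => simp
  | succ n ih => rw [Finset.sum_range_succ, ih]; push_cast; ring

lemma filterCosSum (n m : ℕ) (hm : 0 < m) (hmn : m < n) (r : ℕ) :
    ∑ j ∈ Finset.range (n+m), vpFilter n m j * Real.cos (j * ((r:ℝ) * π / n))
      = if 2*n ∣ r then (n:ℝ) + 1/2 else 1/2 := by
  have hn : (n : ℝ) ≠ 0 := Nat.cast_ne_zero.mpr (by omega)
  have hm' : (m : ℝ) ≠ 0 := Nat.cast_ne_zero.mpr hm.ne'
  set θ : ℝ := (r:ℝ) * π / n with hθ
  -- rewrite with indicator & swap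
  have step1 : ∑ j ∈ Finset.range (n+m), vpFilter n m j * Real.cos (j * θ)
      = (1/(2*(m:ℝ))) * ∑ l ∈ Finset.Ico (n+1-m) (n+m+1),
          ∑ j ∈ Finset.range l, Real.cos (j * θ) := by
    rw [Finset.mul_sum]
    have : ∀ l ∈ Finset.Ico (n+1-m) (n+m+1),
        (1/(2*(m:ℝ))) * ∑ j ∈ Finset.range l, Real.cos (j * θ)
        = (1/(2*(m:ℝ))) * ∑ j ∈ Finset.range (n+m),
            (if j < l then (1:ℝ) else 0) * Real.cos (j * θ) := by
      intro l hl; rw [Finset.mem_Ico] at hl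
      rw [inner_cos_sum θ (n+m) l (by omega)]
    rw [Finset.sum_congr rfl this]
    simp_rw [Finset.mul_sum]
    rw [Finset.sum_comm]
    refine Finset.sum_congr rfl fun j hj => ?_
    rw [Finset.mem_range] at hj
    rw [mu_indicator n m j hm hmn hj, Finset.mul_sum, Finset.sum_mul]
    refine Finset.sum_congr rfl fun l _ => ?_
    ring
  rw [step1]
  by_cases hdvd : 2*n ∣ r
  · rw [if_pos hdvd]
    obtain ⟨q, hq⟩ := hdvd
    have hcos : ∀ j : ℕ, Real.cos ((j:ℝ) * θ) = 1 := by
      intro j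
      have : (j:ℝ) * θ = (j*q : ℕ) * (2 * π) := by
        rw [hθ, hq]; push_cast; field_simp
      rw [this, Real.cos_nat_mul_two_pi]
    have : ∀ l ∈ Finset.Ico (n+1-m) (n+m+1),
        ∑ j ∈ Finset.range l, Real.cos (j * θ) = (l : ℝ) := by
      intro l _
      rw [Finset.sum_congr rfl fun j _ => hcos j, Finset.sum_const, nsmul_eq_mul, mul_one,
        Finset.card_range]
    rw [Finset.sum_congr rfl this, Finset.sum_Ico_eq_sum_range,
      show n + m + 1 - (n+1-m) = 2*m by omega]
    have : ∑ i ∈ Finset.range (2*m), ((n+1-m+i : ℕ) : ℝ)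
        = ∑ i ∈ Finset.range (2*m), (((n:ℝ)+1-m) + (i:ℝ)) := by
      refine Finset.sum_congr rfl fun i _ => ?_
      rw [Nat.cast_add, Nat.cast_sub (by omega : m ≤ n + 1)]
      push_cast; ring
    rw [this, Finset.sum_add_distrib, Finset.sum_const, Finset.card_range, sum_cast_range]
    push_cast
    field_simp
    ring
  · rw [if_neg hdvd]
    have hs : Real.sin (θ/2) ≠ 0 := by
      intro hzero
      obtain ⟨q, hq⟩ := Real.sin_eq_zero_iff.mp hzero
      have hq2 : (q : ℝ) * (2*n) = r := by
        have hπ : (π:ℝ) ≠ 0 := Real.pi_ne_zero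
        rw [hθ] at hq
        field_simp at hq
        have e : ((q:ℝ) * (2*n)) * π = (r:ℝ) * π := by linear_combination π * hq
        exact mul_right_cancel₀ hπ e
      have hq3 : q * (2*(n:ℤ)) = (r:ℤ) := by exact_mod_cast hq2
      exact hdvd (by exact_mod_cast Dvd.intro _ (by linarith [hq3] : (2*(n:ℤ))*q = (r:ℤ)))
    have hdir : ∀ l : ℕ, ∑ j ∈ Finset.range l, Real.cos (j * θ)
        = (Real.sin ((l:ℝ)*θ - θ/2) + Real.sin (θ/2)) / (2 * Real.sin (θ/2)) := by
      intro l
      have h := sum_two_sin_cos θ l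
      rw [← Finset.mul_sum] at h
      rw [eq_div_iff (mul_ne_zero two_ne_zero hs), mul_comm]
      exact h
    have hT : ∑ l ∈ Finset.Ico (n+1-m) (n+m+1), Real.sin ((l:ℝ)*θ - θ/2) = 0 := by
      rw [Finset.sum_Ico_eq_sum_range, show n + m + 1 - (n+1-m) = 2*m by omega]
      set f : ℕ → ℝ := fun i => Real.sin (((n+1-m+i : ℕ) : ℝ)*θ - θ/2) with hf
      have hrefl := Finset.sum_range_reflect f (2*m)
      have hneg : ∀ i ∈ Finset.range (2*m), f (2*m - 1 - i) = - f i := by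
        intro i hi
        rw [Finset.mem_range] at hi
        have e1 : ((n+1-m+(2*m-1-i) : ℕ) : ℝ) = 2*n + 1 - ((n+1-m+i : ℕ):ℝ) := by
          rw [Nat.cast_add, Nat.cast_add, Nat.cast_sub (by omega : m ≤ n+1),
            Nat.cast_sub (by omega : i ≤ 2*m-1), Nat.cast_sub (by omega : 1 ≤ 2*m)]
          push_cast; ring
        rw [hf]
        simp only []
        rw [e1]
        have e2 : (2*(n:ℝ) + 1 - ((n+1-m+i : ℕ):ℝ))*θ - θ/2
            = (r:ℝ) * (2*π) - (((n+1-m+i : ℕ):ℝ)*θ - θ/2) := by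
          rw [hθ]; field_simp; ring
        rw [e2, Real.sin_sub]
        have : Real.sin ((r:ℝ)*(2*π)) = 0 := by
          have : (r:ℝ)*(2*π) = ((2*r : ℤ) : ℝ) * π := by push_cast; ring
          rw [this, Real.sin_int_mul_pi]
        rw [this, Real.cos_nat_mul_two_pi]
        ring
      have : ∑ i ∈ Finset.range (2*m), f i = - ∑ i ∈ Finset.range (2*m), f i := by
        calc ∑ i ∈ Finset.range (2*m), f i
            = ∑ i ∈ Finset.range (2*m), f (2*m - 1 - i) := hrefl.symm
          _ = ∑ i ∈ Finset.range (2*m), (- f i) := Finset.sum_congr rfl hneg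
          _ = - ∑ i ∈ Finset.range (2*m), f i := by rw [Finset.sum_neg_distrib]
      linarith [this]
    rw [Finset.sum_congr rfl fun l _ => hdir l]
    rw [← Finset.sum_div, Finset.sum_add_distrib, hT, Finset.sum_const, Nat.card_Ico,
      show n + m + 1 - (n+1-m) = 2*m by omega, zero_add, nsmul_eq_mul]
    push_cast
    field_simp

end VPaux

/-- the fundamental VP polynomials for `w₁` interpolate at the
Chebyshev nodes of the first kind exactly like the fundamental Lagrange polynomials:
`Φ_{n,k}^m(x_h) = δ_{k,h}`. -/
theorem stmt_12 (m n : ℕ) (hm : 0 < m) (hmn : m < n)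
    (k h : ℕ) (hk1 : 1 ≤ k) (hkn : k ≤ n) (hh1 : 1 ≤ h) (hhn : h ≤ n) :
    vpPhi1 n m k (Real.cos (chebNode1 n h)) = if k = h then 1 else 0 := by
  have hn : 0 < n := hm.trans hmn
  have hnR : (0:ℝ) < n := by exact_mod_cast hn
  have hπ : (0:ℝ) < π := Real.pi_pos
  set th := chebNode1 n h with hth
  set tk := chebNode1 n k with htk
  have node_bounds : ∀ l : ℕ, 1 ≤ l → l ≤ n → 0 ≤ chebNode1 n l ∧ chebNode1 n l ≤ π := by
    intro l hl1 hln
    have hl1R : (1:ℝ) ≤ l := by exact_mod_cast hl1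
    have hlnR : (l:ℝ) ≤ n := by exact_mod_cast hln
    constructor
    · unfold chebNode1
      apply div_nonneg _ (by positivity)
      nlinarith [hπ]
    · unfold chebNode1
      rw [div_le_iff₀ (by positivity)]
      nlinarith [hπ]
  obtain ⟨hth0, hthπ⟩ := node_bounds h hh1 hhn
  obtain ⟨htk0, htkπ⟩ := node_bounds k hk1 hkn
  -- the two natural frequencies
  obtain ⟨d, hd1, hd2, hd3⟩ :
      ∃ d : ℕ, (th - tk = (d:ℝ)*π/n ∨ th - tk = -((d:ℝ)*π/n)) ∧ (d = 0 ↔ k = h) ∧ d < n := by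
    rcases le_total k h with hle | hle
    · refine ⟨h - k, Or.inl ?_, by omega, by omega⟩
      rw [hth, htk]; unfold chebNode1
      rw [Nat.cast_sub hle]
      field_simp; ring
    · refine ⟨k - h, Or.inr ?_, by omega, by omega⟩
      rw [hth, htk]; unfold chebNode1
      rw [Nat.cast_sub hle]
      field_simp; ring
  set b := h + k - 1 with hb
  have hbsum : th + tk = (b:ℝ)*π/n := by
    rw [hth, htk]; unfold chebNode1
    rw [hb, Nat.cast_sub (by omega : 1 ≤ h + k)]
    push_cast; field_simp; ring
  have hcosd : ∀ j : ℕ, Real.cos ((j:ℝ)*(th - tk)) = Real.cos ((j:ℝ) * ((d:ℝ)*π/n)) := by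
    intro j
    rcases hd1 with e | e
    · rw [e]
    · rw [e, mul_neg, Real.cos_neg]
  have hcosb : ∀ j : ℕ, Real.cos ((j:ℝ)*(th + tk)) = Real.cos ((j:ℝ) * ((b:ℝ)*π/n)) := by
    intro j; rw [hbsum]
  -- pointwise rewriting of each summand
  have hterm : ∀ j ∈ Finset.range (n+m),
      vpFilter n m j * chebP1 j (Real.cos th) * chebP1 j (Real.cos tk)
        = (1/π) * (vpFilter n m j * Real.cos ((j:ℝ) * ((d:ℝ)*π/n)))
          + (1/π) * (vpFilter n m j * Real.cos ((j:ℝ) * ((b:ℝ)*π/n)))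
          - (if j = 0 then 1/π else 0) := by
    intro j _
    by_cases hj0 : j = 0
    · subst hj0
      have hμ0 : vpFilter n m 0 = 1 := by unfold vpFilter; rw [if_pos (by omega)]
      have hsq : Real.sqrt π * Real.sqrt π = π := Real.mul_self_sqrt hπ.le
      have hsπ : Real.sqrt π ≠ 0 := by positivity
      simp only [chebP1, if_pos rfl, hμ0, Nat.cast_zero, zero_mul, Real.cos_zero, mul_one,
        if_pos rfl, ↓reduceIte]
      field_simp
      rw [sq, hsq]; ring
    · have hArcH : Real.arccos (Real.cos th) = th := Real.arccos_cos hth0 hthπ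
      have hArcK : Real.arccos (Real.cos tk) = tk := Real.arccos_cos htk0 htkπ
      have hsq2 : Real.sqrt (2/π) * Real.sqrt (2/π) = 2/π :=
        Real.mul_self_sqrt (by positivity)
      simp only [chebP1, if_neg hj0, hArcH, hArcK]
      rw [← hcosd j, ← hcosb j, sub_zero]
      have hprod : Real.cos ((j:ℝ)*(th - tk)) + Real.cos ((j:ℝ)*(th + tk))
          = 2 * Real.cos ((j:ℝ)*th) * Real.cos ((j:ℝ)*tk) := by
        rw [mul_sub, mul_add, Real.cos_sub, Real.cos_add]; ring
      linear_combination (vpFilter n m j * Real.cos ((j:ℝ)*th) * Real.cos ((j:ℝ)*tk)) * hsq2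
        - (vpFilter n m j / π) * hprod
  rw [vpPhi1, Finset.sum_congr rfl hterm, Finset.sum_sub_distrib, Finset.sum_add_distrib,
    ← Finset.mul_sum, ← Finset.mul_sum, filterCosSum n m hm hmn d, filterCosSum n m hm hmn b]
  have hsum0 : ∑ j ∈ Finset.range (n+m), (if j = 0 then (1/π : ℝ) else 0) = 1/π := by
    rw [Finset.sum_ite_eq' (Finset.range (n+m)) 0 (fun _ => (1/π : ℝ))]
    rw [if_pos (Finset.mem_range.mpr (by omega))]
  rw [hsum0]
  have hbnd : ¬ (2*n ∣ b) := by
    intro hdvd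
    have hb1 : 1 ≤ b := by omega
    have := Nat.le_of_dvd (by omega) hdvd
    omega
  rw [if_neg hbnd]
  by_cases hkh : k = h
  · have hd0 : d = 0 := hd2.mpr hkh
    rw [if_pos hkh, if_pos (by simp [hd0])]
    field_simp
    ring
  · have hd0 : d ≠ 0 := fun e => hkh (hd2.mp e)
    have : ¬ (2*n ∣ d) := by
      intro hdvd
      have := Nat.le_of_dvd (by omega) hdvd
      omega
    rw [if_neg hkh, if_neg this]
    field_simp
    ring
end

section
/- Let 0 < m < n, let x_1,…,x_n be the zeros of the n-th Chebyshev polynomial of the first kind and Φ_{n,k}^m the fundamental VP polynomials for w₁. Define V_n^m f(x) = ∑_{k=1}^n f(x_k) Φ_{n,k}^m(x). Then V_n^m P = P for every algebraic polynomial P of degree at most n−m. -/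
open Real

open Polynomial

lemma vp_sum_cos_odd (θ : ℝ) : ∀ N : ℕ, 2 * Real.sin θ *
    ∑ k ∈ Finset.Icc 1 N, Real.cos ((2 * (k:ℝ) - 1) * θ) = Real.sin (2 * N * θ) := by
  intro N
  induction N with
  | zero => simp
  | succ N ih =>
    rw [Finset.sum_Icc_succ_top (by omega : 1 ≤ N + 1)]
    have h1 : Real.sin (2*(N+1:ℕ)*θ) - Real.sin (2*(N:ℕ)*θ)
        = 2 * Real.cos ((2*((N:ℝ)+1) - 1)*θ) * Real.sin θ := by
      have := Real.sin_add ((2*(N:ℝ)+1)*θ) θ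
      have := Real.sin_sub ((2*(N:ℝ)+1)*θ) θ
      push_cast
      have e1 : (2*((N:ℝ)+1))*θ = (2*(N:ℝ)+1)*θ + θ := by ring
      have e2 : (2*(N:ℝ))*θ = (2*(N:ℝ)+1)*θ - θ := by ring
      rw [e1, e2, Real.sin_add, Real.sin_sub]
      ring
    push_cast at h1 ⊢
    rw [mul_add]
    rw [ih]
    linarith [h1]

lemma vp_sum_cos_nodes (n a : ℕ) (hn : 0 < n) (ha : a < 2*n) :
    ∑ k ∈ Finset.Icc 1 n, Real.cos (a * chebNode1 n k)
      = if a = 0 then (n:ℝ) else 0 := by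
  rcases Nat.eq_zero_or_pos a with h0 | hpos
  · subst h0; simp
  · rw [if_neg (by omega)]
    set θ := (a:ℝ) * π / (2*n) with hθ
    have hrw : ∀ k : ℕ, (a:ℝ) * chebNode1 n k = (2*(k:ℝ) - 1) * θ := by
      intro k; rw [hθ]; unfold chebNode1; ring
    have hsum := vp_sum_cos_odd θ n
    have hsin : Real.sin (2 * n * θ) = 0 := by
      have : 2 * (n:ℝ) * θ = a * π := by
        rw [hθ]; field_simp
      rw [this, Real.sin_nat_mul_pi]
    have hθpos : 0 < θ := by
      apply div_pos (by positivity) (by positivity)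
    have hθlt : θ < π := by
      rw [hθ, div_lt_iff₀ (by positivity)]
      have : (a:ℝ) < 2*n := by exact_mod_cast ha
      nlinarith [Real.pi_pos]
    have hsθ : Real.sin θ ≠ 0 := ne_of_gt (Real.sin_pos_of_pos_of_lt_pi hθpos hθlt)
    have : 2 * Real.sin θ * ∑ k ∈ Finset.Icc 1 n, Real.cos ((a:ℝ) * chebNode1 n k) = 0 := by
      rw [Finset.sum_congr rfl (fun k _ => by rw [hrw k])]
      rw [hsum, hsin]
    have h2 : 2 * Real.sin θ ≠ 0 := by positivity
    exact (mul_eq_zero.mp this).resolve_left h2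

lemma vp_sum_cos_nodes_int (n : ℕ) (a : ℤ) (hn : 0 < n) (ha : a.natAbs < 2*n) :
    ∑ k ∈ Finset.Icc 1 n, Real.cos (a * chebNode1 n k)
      = if a = 0 then (n:ℝ) else 0 := by
  have hnode : ∀ k ∈ Finset.Icc 1 n, (0:ℝ) ≤ chebNode1 n k := by
    intro k hk
    simp only [Finset.mem_Icc] at hk
    unfold chebNode1
    apply div_nonneg _ (by positivity)
    have : (1:ℝ) ≤ (k:ℝ) := by exact_mod_cast hk.1
    nlinarith [Real.pi_pos]
  have : ∀ k ∈ Finset.Icc 1 n, Real.cos ((a:ℝ) * chebNode1 n k)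
      = Real.cos ((a.natAbs : ℝ) * chebNode1 n k) := by
    intro k hk
    have habs : ((a.natAbs:ℝ)) = |(a:ℝ)| := by
      rw [Nat.cast_natAbs, Int.cast_abs]
    rw [habs, show |(a:ℝ)| * chebNode1 n k = |(a:ℝ) * chebNode1 n k| by
      rw [abs_mul, abs_of_nonneg (hnode k hk)], Real.cos_abs]
  rw [Finset.sum_congr rfl this, vp_sum_cos_nodes n a.natAbs hn ha]
  simp [Int.natAbs_eq_zero]

lemma vp_ortho (n m l j : ℕ) (hm : 0 < m) (hmn : m < n) (hl : l ≤ n - m) (hj : j < n + m) :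
    ∑ k ∈ Finset.Icc 1 n, Real.cos (l * chebNode1 n k) * Real.cos (j * chebNode1 n k)
      = if l = j then (if l = 0 then (n:ℝ) else n/2) else 0 := by
  have hn : 0 < n := by omega
  have key : ∀ t : ℝ, Real.cos (l * t) * Real.cos (j * t)
      = (Real.cos (((l+j:ℕ):ℝ) * t) + Real.cos ((((l:ℤ)-j:ℤ):ℝ) * t)) / 2 := by
    intro t
    have e1 : ((l+j:ℕ):ℝ) * t = (l:ℝ)*t + (j:ℝ)*t := by push_cast; ring
    have e2 : (((l:ℤ)-j:ℤ):ℝ) * t = (l:ℝ)*t - (j:ℝ)*t := by push_cast; ring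
    rw [e1, e2, Real.cos_add, Real.cos_sub]
    ring
  rw [Finset.sum_congr rfl (fun k _ => key (chebNode1 n k))]
  rw [← Finset.sum_div, Finset.sum_add_distrib,
    vp_sum_cos_nodes n (l+j) hn (by omega),
    vp_sum_cos_nodes_int n ((l:ℤ)-j) hn (by omega)]
  have hlj : ((l:ℤ) - j = 0) ↔ l = j := by omega
  by_cases h : l = j
  · subst h
    rw [if_pos rfl, if_pos (by omega : (l:ℤ) - l = 0)]
    by_cases h0 : l = 0
    · subst h0
      rw [if_pos rfl, if_pos rfl]
      ring
    · rw [if_neg (by omega : ¬ l + l = 0), if_neg h0]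
      ring
  · rw [if_neg h, if_neg (fun hc => h (hlj.mp hc)), if_neg (by omega)]
    norm_num

lemma vp_good_T (m n : ℕ) (hm : 0 < m) (hmn : m < n) (l : ℕ) (hl : l ≤ n - m)
    (x : ℝ) (hx : x ∈ Set.Icc (-1 : ℝ) 1) :
    ∑ k ∈ Finset.Icc 1 n, Real.cos (l * Real.arccos (Real.cos (chebNode1 n k))) * vpPhi1 n m k x
      = Real.cos (l * Real.arccos x) := by
  have hn : 0 < n := by omega
  have hπ := Real.pi_pos
  -- nodes lie in [0, π]
  have hnode : ∀ k ∈ Finset.Icc 1 n, Real.arccos (Real.cos (chebNode1 n k)) = chebNode1 n k := by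
    intro k hk
    simp only [Finset.mem_Icc] at hk
    apply Real.arccos_cos
    · unfold chebNode1
      apply div_nonneg _ (by positivity)
      have : (1:ℝ) ≤ (k:ℝ) := by exact_mod_cast hk.1
      nlinarith
    · unfold chebNode1
      rw [div_le_iff₀ (by positivity)]
      have : (k:ℝ) ≤ (n:ℝ) := by exact_mod_cast hk.2
      nlinarith
  -- rewrite chebP1 at nodes
  set cj : ℕ → ℝ := fun j => if j = 0 then 1 / Real.sqrt π else Real.sqrt (2 / π) with hcj
  have hchebnode : ∀ j, ∀ k ∈ Finset.Icc 1 n,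
      chebP1 j (Real.cos (chebNode1 n k)) = cj j * Real.cos (j * chebNode1 n k) := by
    intro j k hk
    unfold chebP1
    rw [hnode k hk]
    by_cases h0 : j = 0
    · subst h0; simp [hcj]
    · simp [hcj, h0]
  have hchebx : ∀ j, chebP1 j x = cj j * Real.cos (j * Real.arccos x) := by
    intro j
    unfold chebP1
    by_cases h0 : j = 0
    · subst h0; simp [hcj]
    · simp [hcj, h0]
  -- swap sums
  unfold vpPhi1
  have e1 : ∀ k ∈ Finset.Icc 1 n,
      Real.cos (l * Real.arccos (Real.cos (chebNode1 n k))) *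
      ((π / n) * ∑ j ∈ Finset.range (n + m),
        vpFilter n m j * chebP1 j x * chebP1 j (Real.cos (chebNode1 n k)))
      = ∑ j ∈ Finset.range (n + m), (π / n * (vpFilter n m j * chebP1 j x * cj j)) *
          (Real.cos (l * chebNode1 n k) * Real.cos (j * chebNode1 n k)) := by
    intro k hk
    rw [Finset.mul_sum, Finset.mul_sum]
    apply Finset.sum_congr rfl
    intro j _
    rw [hnode k hk, hchebnode j k hk]
    ring
  rw [Finset.sum_congr rfl e1, Finset.sum_comm]
  have e2 : ∀ j ∈ Finset.range (n + m),
      ∑ k ∈ Finset.Icc 1 n, (π / n * (vpFilter n m j * chebP1 j x * cj j)) *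
          (Real.cos (l * chebNode1 n k) * Real.cos (j * chebNode1 n k))
      = (π / n * (vpFilter n m j * chebP1 j x * cj j)) *
          (if l = j then (if l = 0 then (n:ℝ) else n/2) else 0) := by
    intro j hj
    rw [← Finset.mul_sum, vp_ortho n m l j hm hmn hl (Finset.mem_range.mp hj)]
  rw [Finset.sum_congr rfl e2]
  rw [Finset.sum_eq_single_of_mem l (Finset.mem_range.mpr (by omega))]
  · rw [if_pos rfl, hchebx l]
    have hvp : vpFilter n m l = 1 := by
      unfold vpFilter; rw [if_pos (by omega)]
    rw [hvp]
    have hsπ : Real.sqrt π ≠ 0 := by positivity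
    have hnne : (n:ℝ) ≠ 0 := by positivity
    have hππ : Real.sqrt π * Real.sqrt π = π := Real.mul_self_sqrt hπ.le
    have h2π : Real.sqrt (2/π) * Real.sqrt (2/π) = 2/π :=
      Real.mul_self_sqrt (by positivity)
    by_cases h0 : l = 0
    · simp only [hcj, if_pos h0]
      calc π / (n:ℝ) * (1 * (1 / Real.sqrt π * Real.cos (l * Real.arccos x)) * (1 / Real.sqrt π)) * (n:ℝ)
          = (π / (n:ℝ) * (n:ℝ)) / (Real.sqrt π * Real.sqrt π) * Real.cos (l * Real.arccos x) := by
            ring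
        _ = Real.cos (l * Real.arccos x) := by
            rw [hππ]; field_simp
    · simp only [hcj, if_neg h0]
      calc π / (n:ℝ) * (1 * (Real.sqrt (2/π) * Real.cos (l * Real.arccos x)) * Real.sqrt (2/π)) * ((n:ℝ)/2)
          = (Real.sqrt (2/π) * Real.sqrt (2/π)) * (π / (n:ℝ) * ((n:ℝ)/2)) * Real.cos (l * Real.arccos x) := by
            ring
        _ = Real.cos (l * Real.arccos x) := by
            rw [h2π]; field_simp
  · intro j _ hjl
    rw [if_neg (fun hc => hjl hc.symm), mul_zero]

lemma vp_T_degree : ∀ l : ℕ, (Polynomial.Chebyshev.T ℝ (l:ℤ)).degree = l := by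
  intro l
  induction l using Nat.twoStepInduction with
  | zero => simp [Polynomial.Chebyshev.T_zero]
  | one => simp [Polynomial.Chebyshev.T_one]
  | more k ih1 ih2 =>
    have h : ((k:ℤ)+2) = ((k+2:ℕ):ℤ) := by push_cast; ring
    rw [show ((k+2:ℕ):ℤ) = (k:ℤ)+2 by push_cast; ring, Polynomial.Chebyshev.T_add_two]
    have hd1 : (2 * X * Polynomial.Chebyshev.T ℝ ((k:ℤ)+1)).degree = ((k+2 : ℕ) : WithBot ℕ) := by
      rw [show (k:ℤ)+1 = ((k+1:ℕ):ℤ) by push_cast; ring]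
      rw [degree_mul, degree_mul, ih2]
      rw [show (2 : ℝ[X]) = C 2 from rfl, degree_C (two_ne_zero), degree_X]
      push_cast
      norm_cast
      omega
    rw [degree_sub_eq_left_of_degree_lt, hd1]
    rw [hd1]
    calc (Polynomial.Chebyshev.T ℝ (k:ℤ)).degree = (k : WithBot ℕ) := ih1
      _ < ((k+2:ℕ) : WithBot ℕ) := by exact_mod_cast WithBot.coe_lt_coe.mpr (by omega)


/-- the VP interpolation operator
`V_n^m f = ∑_{k=1}^n f(x_k) Φ_{n,k}^m` at the Chebyshev nodes of the first kind
reproduces every polynomial of degree at most `n - m`. -/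
theorem stmt_13 (m n : ℕ) (hm : 0 < m) (hmn : m < n)
    (P : Polynomial ℝ) (hP : P.degree ≤ (n - m : ℕ))
    (x : ℝ) (hx : x ∈ Set.Icc (-1 : ℝ) 1) :
    ∑ k ∈ Finset.Icc 1 n, P.eval (Real.cos (chebNode1 n k)) * vpPhi1 n m k x
      = P.eval x := by
  obtain ⟨hx1, hx2⟩ := hx
  set Good : Polynomial ℝ → Prop := fun Q =>
    ∑ k ∈ Finset.Icc 1 n, Q.eval (Real.cos (chebNode1 n k)) * vpPhi1 n m k x = Q.eval x
    with hGood
  have good_add : ∀ Q R, Good Q → Good R → Good (Q + R) := by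
    intro Q R hQ hR
    simp only [hGood, eval_add, add_mul, Finset.sum_add_distrib] at *
    rw [hQ, hR]
  have good_smul : ∀ (c : ℝ) Q, Good Q → Good (C c * Q) := by
    intro c Q hQ
    simp only [hGood, eval_mul, eval_C] at *
    calc ∑ k ∈ Finset.Icc 1 n, c * Q.eval (Real.cos (chebNode1 n k)) * vpPhi1 n m k x
        = c * ∑ k ∈ Finset.Icc 1 n, Q.eval (Real.cos (chebNode1 n k)) * vpPhi1 n m k x := by
          rw [Finset.mul_sum]; apply Finset.sum_congr rfl; intro k _; ring
      _ = c * Q.eval x := by rw [hQ]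
  have good_cheb : ∀ l : ℕ, l ≤ n - m → Good (Polynomial.Chebyshev.T ℝ (l:ℤ)) := by
    intro l hl
    have hT : ∀ y : ℝ, -1 ≤ y → y ≤ 1 →
        (Polynomial.Chebyshev.T ℝ (l:ℤ)).eval y = Real.cos (l * Real.arccos y) := by
      intro y hy1 hy2
      have := Polynomial.Chebyshev.T_real_cos (Real.arccos y) (l:ℤ)
      rw [Real.cos_arccos hy1 hy2] at this
      rw [this]; push_cast; ring_nf
    have hnodemem : ∀ k : ℕ, -1 ≤ Real.cos (chebNode1 n k) ∧ Real.cos (chebNode1 n k) ≤ 1 :=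
      fun k => ⟨Real.neg_one_le_cos _, Real.cos_le_one _⟩
    simp only [hGood]
    rw [Finset.sum_congr rfl (fun k _ => by
      rw [hT _ (hnodemem k).1 (hnodemem k).2]), hT x hx1 hx2]
    exact vp_good_T m n hm hmn l hl x ⟨hx1, hx2⟩
  -- strong induction
  have key : ∀ N : ℕ, ∀ Q : Polynomial ℝ, Q.natDegree < N → Q.degree ≤ ((n - m : ℕ) : WithBot ℕ) → Good Q := by
    intro N
    induction N with
    | zero => intro Q h; omega
    | succ N ih =>
      intro Q hdeg hQle
      by_cases h0 : Q = 0
      · subst h0; simp [hGood]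
      have hd : Q.natDegree ≤ n - m := natDegree_le_iff_degree_le.mpr hQle
      set d := Q.natDegree with hdn
      have hTd : (Polynomial.Chebyshev.T ℝ (d:ℤ)).degree = d := vp_T_degree d
      have hTne : (Polynomial.Chebyshev.T ℝ (d:ℤ)) ≠ 0 := by
        intro hc; rw [hc, degree_zero] at hTd; exact absurd hTd (by simp)
      have hTlc : (Polynomial.Chebyshev.T ℝ (d:ℤ)).leadingCoeff ≠ 0 := leadingCoeff_ne_zero.mpr hTne
      set c := Q.leadingCoeff / (Polynomial.Chebyshev.T ℝ (d:ℤ)).leadingCoeff with hc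
      have hcne : c ≠ 0 := div_ne_zero (leadingCoeff_ne_zero.mpr h0) hTlc
      set R := Q - C c * Polynomial.Chebyshev.T ℝ (d:ℤ) with hR
      have hdegCT : (C c * Polynomial.Chebyshev.T ℝ (d:ℤ)).degree = Q.degree := by
        rw [degree_mul, degree_C hcne, zero_add, hTd, degree_eq_natDegree h0]
      have hlcCT : (C c * Polynomial.Chebyshev.T ℝ (d:ℤ)).leadingCoeff = Q.leadingCoeff := by
        rw [leadingCoeff_mul, leadingCoeff_C, hc, div_mul_cancel₀ _ hTlc]
      have hRdeg : R.degree < Q.degree := degree_sub_lt hdegCT.symm h0 hlcCT.symm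
      have hQeq : Q = R + C c * Polynomial.Chebyshev.T ℝ (d:ℤ) := by rw [hR]; ring
      have goodCT : Good (C c * Polynomial.Chebyshev.T ℝ (d:ℤ)) :=
        good_smul c _ (good_cheb d hd)
      by_cases hR0 : R = 0
      · rw [hQeq, hR0, zero_add]; exact goodCT
      · have hRlt : R.natDegree < d := by
          have := natDegree_lt_natDegree hR0 hRdeg
          omega
        have goodR : Good R := ih R (by omega) (le_trans hRdeg.le hQle)
        rw [hQeq]; exact good_add _ _ goodR goodCT
  exact key (P.natDegree + 1) P (by omega) hP
end

section
/- Let u(x) = (1−x)^γ(1+x)^δ with γ > 1, δ ≥ 0, and for even n = 2lν, m = 2lμ (0 < μ < ν coprime, l ∈ ℕ) let V_n^m be the VP interpolation operator at the zeros of the n-th Chebyshev polynomial of the first kind. Then the weighted Lebesgue constants ∥V_n^m∥_u = sup_{|x|≤1} u(x) ∑_{k=1}^n |Φ_{n,k}^m(x)|/u(x_k) satisfy ∥V_n^m∥_u ≥ C n^{2γ−2} for some C > 0 independent of l; in particular sup_l ∥V_n^m∥_u = ∞. -/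
open Real

/-- The Jacobi weight `u(x) = (1-x)^γ (1+x)^δ`. -/
noncomputable def jacobiU (γ δ x : ℝ) : ℝ := (1 - x) ^ γ * (1 + x) ^ δ

/-- The weighted Lebesgue constant of the VP interpolation operator at the Chebyshev
nodes of the first kind:
`∥V_n^m∥_u = sup_{|x|≤1} u(x) ∑_{k=1}^n |Φ_{n,k}^m(x)|/u(x_k)`. -/
noncomputable def vpLeb (γ δ : ℝ) (n m : ℕ) : ℝ :=
  sSup {y | ∃ x ∈ Set.Icc (-1 : ℝ) 1, y =
    jacobiU γ δ x * ∑ k ∈ Finset.Icc 1 n,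
      |vpPhi1 n m k x| / jacobiU γ δ (Real.cos (chebNode1 n k))}

lemma key_sin (θ c : ℝ) :
    2 * Real.sin (θ/2) * Real.cos (c*θ) = Real.sin ((c+1/2)*θ) - Real.sin ((c-1/2)*θ) := by
  have e1 : (c+1/2)*θ = c*θ + θ/2 := by ring
  have e2 : (c-1/2)*θ = c*θ - θ/2 := by ring
  rw [e1, e2, Real.sin_add, Real.sin_sub]; ring

lemma key_cos (θ c : ℝ) :
    2 * Real.sin (θ/2) * Real.sin (c*θ) = Real.cos ((c-1/2)*θ) - Real.cos ((c+1/2)*θ) := by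
  have e1 : (c+1/2)*θ = c*θ + θ/2 := by ring
  have e2 : (c-1/2)*θ = c*θ - θ/2 := by ring
  rw [e1, e2, Real.cos_add, Real.cos_sub]; ring

lemma dir1 (θ : ℝ) (r : ℕ) :
    2 * Real.sin (θ/2) * (1/2 + ∑ j ∈ Finset.range r, Real.cos (((j:ℝ)+1)*θ))
      = Real.sin (((r:ℝ) + 1/2)*θ) := by
  induction r with
  | zero =>
      norm_num
      rw [show (1:ℝ)/2*θ = θ/2 by ring]
      ring
  | succ r ih =>
      rw [Finset.sum_range_succ, ← add_assoc, mul_add, ih, key_sin θ ((r:ℝ)+1)]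
      push_cast
      ring_nf

lemma dir2 (θ : ℝ) (r : ℕ) :
    (2 * Real.sin (θ/2))^2 * (1/2 + ∑ j ∈ Finset.range r, Real.cos (((j:ℝ)+1)*θ))
      = Real.cos ((r:ℝ)*θ) - Real.cos (((r:ℝ)+1)*θ) := by
  rw [show (2 * Real.sin (θ/2))^2 * (1/2 + ∑ j ∈ Finset.range r, Real.cos (((j:ℝ)+1)*θ))
      = 2 * Real.sin (θ/2) * (2 * Real.sin (θ/2) * (1/2 + ∑ j ∈ Finset.range r, Real.cos (((j:ℝ)+1)*θ))) from by ring,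
    dir1, key_cos θ ((r:ℝ)+1/2)]
  ring_nf

noncomputable def ksum (n m : ℕ) (θ : ℝ) : ℝ :=
  ∑ j ∈ Finset.range (n + m), (if j = 0 then (1:ℝ)/2 else vpFilter n m j) * Real.cos ((j:ℝ)*θ)

lemma swap_sum (a b : ℕ) (hab : a ≤ b) (f : ℕ → ℝ) :
    ∑ r ∈ Finset.Ico a b, ∑ j ∈ Finset.range r, f j
      = ∑ j ∈ Finset.range b, ((b - max a (j+1) : ℕ) : ℝ) * f j := by
  have h1 : ∀ r ∈ Finset.Ico a b, ∑ j ∈ Finset.range r, f j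
      = ∑ j ∈ Finset.range b, (if j < r then f j else 0) := by
    intro r hr
    rw [Finset.mem_Ico] at hr
    rw [← Finset.sum_filter]
    congr 1
    ext j
    simp only [Finset.mem_filter, Finset.mem_range]
    omega
  rw [Finset.sum_congr rfl h1, Finset.sum_comm]
  refine Finset.sum_congr rfl fun j hj => ?_
  rw [← Finset.sum_filter]
  have : (Finset.Ico a b).filter (fun r => j < r) = Finset.Ico (max a (j+1)) b := by
    ext r
    simp only [Finset.mem_filter, Finset.mem_Ico, max_le_iff]
    omega
  rw [this, Finset.sum_const, Nat.card_Ico, nsmul_eq_mul]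

lemma coeff_eq (n m j : ℕ) (hm : 0 < m) (hmn : m ≤ n) (hj : j < n + m) :
    2*(m:ℝ) * vpFilter n m (j+1) = ((n + m - max (n-m) (j+1) : ℕ) : ℝ) := by
  have hm' : (m:ℝ) ≠ 0 := Nat.cast_ne_zero.mpr hm.ne'
  rw [vpFilter]
  by_cases h : (j+1) + m ≤ n
  · rw [if_pos h, max_eq_left (by omega : j+1 ≤ n-m)]
    have e : n + m - (n - m) = 2*m := by omega
    rw [e]; push_cast; ring
  · rw [if_neg h, max_eq_right (by omega : n-m ≤ j+1)]
    have hle : j + 1 ≤ n + m := by omega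
    rw [Nat.cast_sub hle]
    push_cast
    field_simp

lemma ksum_eq (n m : ℕ) (hm : 0 < m) (hmn : m ≤ n) (θ : ℝ) :
    2 * (m:ℝ) * ksum n m θ
      = ∑ r ∈ Finset.Ico (n-m) (n+m), (1/2 + ∑ j ∈ Finset.range r, Real.cos (((j:ℝ)+1)*θ)) := by
  rw [Finset.sum_add_distrib, swap_sum (n-m) (n+m) (by omega) (fun j => Real.cos (((j:ℝ)+1)*θ))]
  rw [Finset.sum_const, Nat.card_Ico, nsmul_eq_mul]
  obtain ⟨b', hb'⟩ : ∃ b', n + m = b' + 1 := ⟨n+m-1, by omega⟩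
  rw [ksum, hb', Finset.sum_range_succ' _ b', Finset.sum_range_succ _ b']
  have hlast : ((b' + 1 - max (n-m) (b'+1) : ℕ) : ℝ) * Real.cos (((b':ℝ)+1)*θ) = 0 := by
    have e : b' + 1 - max (n-m) (b'+1) = 0 := by omega
    rw [e]; simp
  rw [hlast, add_zero]
  have hhalf : ((b' + 1 - (n-m) : ℕ) : ℝ) = 2*(m:ℝ) := by
    have e : b' + 1 - (n-m) = 2*m := by omega
    rw [e]; push_cast; ring
  rw [hhalf, mul_add, Finset.mul_sum]
  have hsum : ∀ j ∈ Finset.range b',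
      2*(m:ℝ) * ((if j+1 = 0 then (1:ℝ)/2 else vpFilter n m (j+1)) * Real.cos (((j+1:ℕ):ℝ)*θ))
        = ((b' + 1 - max (n-m) (j+1) : ℕ):ℝ) * Real.cos (((j:ℝ)+1)*θ) := by
    intro j hj
    rw [if_neg (Nat.succ_ne_zero j)]
    have hc := coeff_eq n m j hm hmn (by rw [hb']; exact Nat.lt_succ_of_lt (Finset.mem_range.mp hj))
    rw [hb'] at hc
    have harg : ((j+1:ℕ):ℝ) = (j:ℝ)+1 := by push_cast; ring
    rw [harg, ← mul_assoc, hc]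
  rw [Finset.sum_congr rfl hsum]
  have h0 : (if (0:ℕ) = 0 then (1:ℝ)/2 else vpFilter n m 0) * Real.cos (((0:ℕ):ℝ)*θ) = 1/2 := by
    norm_num
  rw [h0]
  ring

lemma kernelEval (n m : ℕ) (hm : 0 < m) (hmn : m ≤ n) (θ : ℝ) :
    (2*Real.sin (θ/2))^2 * (2*(m:ℝ) * ksum n m θ)
      = 2 * Real.sin ((n:ℝ)*θ) * Real.sin ((m:ℝ)*θ) := by
  rw [ksum_eq n m hm hmn θ, Finset.mul_sum]
  rw [Finset.sum_congr rfl (fun r _ => dir2 θ r)]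
  rw [Finset.sum_Ico_eq_sum_range]
  have h2m : n + m - (n - m) = 2*m := by omega
  rw [h2m]
  have hterm : ∀ i ∈ Finset.range (2*m),
      Real.cos ((((n-m) + i :ℕ):ℝ)*θ) - Real.cos (((((n-m) + i :ℕ):ℝ)+1)*θ)
        = (fun k => Real.cos (((n-m+k:ℕ):ℝ)*θ)) i - (fun k => Real.cos (((n-m+k:ℕ):ℝ)*θ)) (i+1) := by
    intro i _
    simp only []
    have : ((n-m+(i+1):ℕ):ℝ) = ((n-m+i:ℕ):ℝ)+1 := by push_cast; ring
    rw [this]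
  rw [Finset.sum_congr rfl hterm, Finset.sum_range_sub' (fun k => Real.cos (((n-m+k:ℕ):ℝ)*θ))]
  simp only [Nat.add_zero]
  have e2 : n - m + 2*m = n + m := by omega
  rw [e2]
  have c1 : ((n-m:ℕ):ℝ) = (n:ℝ) - m := by push_cast [Nat.cast_sub hmn]; ring
  have c2 : ((n+m:ℕ):ℝ) = (n:ℝ) + m := by push_cast; ring
  rw [c1, c2, show ((n:ℝ)-m)*θ = (n:ℝ)*θ - (m:ℝ)*θ from by ring,
    show ((n:ℝ)+m)*θ = (n:ℝ)*θ + (m:ℝ)*θ from by ring, Real.cos_sub, Real.cos_add]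
  ring

lemma phi_eq (n m : ℕ) (hm : 0 < m) (hmn : m ≤ n) (hn1 : 1 ≤ n) :
    vpPhi1 n m 1 0
      = (1/(n:ℝ)) * (ksum n m (π/2 - π/(2*(n:ℝ))) + ksum n m (π/2 + π/(2*(n:ℝ)))) := by
  have hnne : (n:ℝ) ≠ 0 := Nat.cast_ne_zero.mpr (by omega)
  have hnpos : (0:ℝ) < n := by positivity
  set t1 : ℝ := π/(2*(n:ℝ)) with ht1
  have hnode : chebNode1 n 1 = t1 := by rw [chebNode1, ht1]; norm_num
  have ht1pos : 0 < t1 := by rw [ht1]; positivity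
  have ht1le : t1 ≤ π := by
    rw [ht1, div_le_iff₀ (by positivity)]
    nlinarith [Real.pi_pos, (by exact_mod_cast hn1 : (1:ℝ) ≤ (n:ℝ))]
  have harc : Real.arccos (Real.cos t1) = t1 := Real.arccos_cos ht1pos.le ht1le
  rw [vpPhi1, ksum, ksum, ← Finset.sum_add_distrib, Finset.mul_sum, Finset.mul_sum, hnode]
  refine Finset.sum_congr rfl fun j _ => ?_
  by_cases hj : j = 0
  · subst hj
    simp only [chebP1, if_pos rfl, vpFilter, Nat.cast_zero, zero_mul, Real.cos_zero]
    rw [if_pos (by omega : 0 + m ≤ n)]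
    have : Real.sqrt π * Real.sqrt π = π := Real.mul_self_sqrt Real.pi_pos.le
    field_simp
    simp only [if_true, inv_pow, Real.sq_sqrt Real.pi_pos.le, mul_inv_cancel₀ Real.pi_ne_zero]; norm_num
    rw [Real.sq_sqrt Real.pi_pos.le, mul_inv_cancel₀ Real.pi_ne_zero]
  · simp only [chebP1, if_neg hj, harc, Real.arccos_zero]
    have hs : Real.sqrt (2/π) * Real.sqrt (2/π) = 2/π :=
      Real.mul_self_sqrt (by positivity)
    have key : Real.cos ((j:ℝ)*(π/2 - t1)) + Real.cos ((j:ℝ)*(π/2 + t1))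
        = 2 * Real.cos ((j:ℝ)*(π/2)) * Real.cos ((j:ℝ)*t1) := by
      rw [show (j:ℝ)*(π/2 - t1) = (j:ℝ)*(π/2) - (j:ℝ)*t1 from by ring,
          show (j:ℝ)*(π/2 + t1) = (j:ℝ)*(π/2) + (j:ℝ)*t1 from by ring,
          Real.cos_sub, Real.cos_add]
      ring
    have hinv : π * π⁻¹ = (1:ℝ) := mul_inv_cancel₀ Real.pi_ne_zero
    linear_combination (π/(n:ℝ)) * vpFilter n m j * Real.cos ((j:ℝ)*(π/2)) * Real.cos ((j:ℝ)*t1) * hs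
      - (vpFilter n m j/(n:ℝ)) * key
      + (2*vpFilter n m j*Real.cos ((j:ℝ)*(π/2))*Real.cos ((j:ℝ)*t1)/(n:ℝ)) * hinv

lemma ksum_div (n m : ℕ) (hm : 0 < m) (hmn : m ≤ n) (θ : ℝ) (hs : Real.sin (θ/2) ≠ 0) :
    ksum n m θ = 2 * Real.sin ((n:ℝ)*θ) * Real.sin ((m:ℝ)*θ)
      / ((2*Real.sin (θ/2))^2 * (2*(m:ℝ))) := by
  have hden : (2*Real.sin (θ/2))^2 * (2*(m:ℝ)) ≠ 0 := by
    have : (m:ℝ) ≠ 0 := Nat.cast_ne_zero.mpr hm.ne'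
    positivity
  rw [eq_div_iff hden]
  have h := kernelEval n m hm hmn θ
  linarith [h, (by ring : (2*Real.sin (θ/2))^2 * (2*(m:ℝ) * ksum n m θ)
    = ksum n m θ * ((2*Real.sin (θ/2))^2 * (2*(m:ℝ))))]

set_option maxHeartbeats 1000000 in
lemma phi_lower (l μ ν n m : ℕ) (hl : 1 ≤ l) (hμ : 0 < μ) (hμν : μ < ν)
    (hn : n = 2*l*ν) (hm0 : m = 2*l*μ) :
    Real.sin ((μ:ℝ)*π/(2*(ν:ℝ))) / (2*(m:ℝ)*(n:ℝ)) ≤ |vpPhi1 n m 1 0| := by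
  have hm : 0 < m := by rw [hm0]; positivity
  have hmn : m ≤ n := by rw [hm0, hn]; exact Nat.mul_le_mul_left _ hμν.le
  have hn1 : 1 ≤ n := by rw [hn]; nlinarith [hl, (by omega : 1 ≤ ν)]
  have hn2' : 2 ≤ n := by rw [hn]; nlinarith [hl, (by omega : 1 ≤ ν)]
  have hlpos : (0:ℝ) < l := by exact_mod_cast hl
  have hνpos : (0:ℝ) < ν := by exact_mod_cast (by omega : 0 < ν)
  have hμpos : (0:ℝ) < μ := by exact_mod_cast hμ
  have hμνR : (μ:ℝ) < (ν:ℝ) := by exact_mod_cast hμν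
  have hnR : (n:ℝ) = 2*(l:ℝ)*(ν:ℝ) := by rw [hn]; push_cast; ring
  have hmR : (m:ℝ) = 2*(l:ℝ)*(μ:ℝ) := by rw [hm0]; push_cast; ring
  have hnpos : (0:ℝ) < n := by rw [hnR]; positivity
  have hmpos : (0:ℝ) < m := by rw [hmR]; positivity
  have hn2 : (2:ℝ) ≤ (n:ℝ) := by exact_mod_cast hn2'
  have hπ := Real.pi_pos
  set t1 : ℝ := π/(2*(n:ℝ)) with ht1
  have ht1pos : 0 < t1 := by rw [ht1]; positivity
  have ht1lt : t1 < π/2 := by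
    rw [ht1]
    rw [div_lt_div_iff₀ (by positivity) (by norm_num)]
    nlinarith
  set β : ℝ := (μ:ℝ)*π/(2*(ν:ℝ)) with hβ
  have hβpos : 0 < β := by rw [hβ]; positivity
  have hβlt : β < π/2 := by
    rw [hβ, div_lt_div_iff₀ (by positivity) (by norm_num)]
    nlinarith
  have ha : 0 < Real.sin β := Real.sin_pos_of_pos_of_lt_pi hβpos (by nlinarith)
  set θm : ℝ := π/2 - t1 with hθm
  set θp : ℝ := π/2 + t1 with hθp
  have hsm : 0 < Real.sin (θm/2) := by
    apply Real.sin_pos_of_pos_of_lt_pi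
    · rw [hθm]; nlinarith
    · rw [hθm]; nlinarith
  have hsp : 0 < Real.sin (θp/2) := by
    apply Real.sin_pos_of_pos_of_lt_pi
    · rw [hθp]; nlinarith
    · rw [hθp]; nlinarith
  have s1 : Real.sin (((l*ν:ℕ):ℝ)*π) = 0 := Real.sin_nat_mul_pi (l*ν)
  have s2 : Real.sin (((l*μ:ℕ):ℝ)*π) = 0 := Real.sin_nat_mul_pi (l*μ)
  set c1 : ℝ := Real.cos (((l*ν:ℕ):ℝ)*π) with hc1
  set c2 : ℝ := Real.cos (((l*μ:ℕ):ℝ)*π) with hc2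
  have hc1sq : c1^2 = 1 := by
    have h := Real.sin_sq_add_cos_sq (((l*ν:ℕ):ℝ)*π)
    rw [s1] at h; rw [hc1]; nlinarith
  have hc2sq : c2^2 = 1 := by
    have h := Real.sin_sq_add_cos_sq (((l*μ:ℕ):ℝ)*π)
    rw [s2] at h; rw [hc2]; nlinarith
  have hA1 : (n:ℝ)*θm = ((l*ν:ℕ):ℝ)*π - π/2 := by
    rw [hθm, ht1, hnR]; push_cast; field_simp
  have hA2 : (n:ℝ)*θp = ((l*ν:ℕ):ℝ)*π + π/2 := by
    rw [hθp, ht1, hnR]; push_cast; field_simp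
  have hB1 : (m:ℝ)*θm = ((l*μ:ℕ):ℝ)*π - β := by
    rw [hθm, ht1, hβ, hnR, hmR]; push_cast; field_simp
  have hB2 : (m:ℝ)*θp = ((l*μ:ℕ):ℝ)*π + β := by
    rw [hθp, ht1, hβ, hnR, hmR]; push_cast; field_simp
  have hsin1 : Real.sin ((n:ℝ)*θm) = -c1 := by
    rw [hA1, Real.sin_sub, s1, Real.sin_pi_div_two, Real.cos_pi_div_two, hc1]; ring
  have hsin2 : Real.sin ((n:ℝ)*θp) = c1 := by
    rw [hA2, Real.sin_add, s1, Real.sin_pi_div_two, Real.cos_pi_div_two, hc1]; ring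
  have hsin3 : Real.sin ((m:ℝ)*θm) = -(c2 * Real.sin β) := by
    rw [hB1, Real.sin_sub, s2, hc2]; ring
  have hsin4 : Real.sin ((m:ℝ)*θp) = c2 * Real.sin β := by
    rw [hB2, Real.sin_add, s2, hc2]; ring
  have hphi := phi_eq n m hm hmn hn1
  rw [ksum_div n m hm hmn θm hsm.ne', ksum_div n m hm hmn θp hsp.ne',
    hsin1, hsin2, hsin3, hsin4] at hphi
  set sm := Real.sin (θm/2) with hsmdef
  set sp := Real.sin (θp/2) with hspdef
  set Q : ℝ := (1/(n:ℝ)) * (2*Real.sin β/((2*sm)^2*(2*(m:ℝ)))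
          + 2*Real.sin β/((2*sp)^2*(2*(m:ℝ)))) with hQ
  have hQform : vpPhi1 n m 1 0 = (c1*c2) * Q := by
    rw [hphi, hQ]; field_simp
  have hQlow : Real.sin β / (2*(m:ℝ)*(n:ℝ)) ≤ Q := by
    have e1 : Real.sin β / (2*(m:ℝ)*(n:ℝ))
        = (1/(n:ℝ)) * (2*Real.sin β/((2:ℝ)^2*(2*(m:ℝ))) + 2*Real.sin β/((2:ℝ)^2*(2*(m:ℝ)))) := by
      field_simp; ring
    rw [e1, hQ]
    have hsm1 : sm ≤ 1 := by rw [hsmdef]; exact Real.sin_le_one _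
    have hsp1 : sp ≤ 1 := by rw [hspdef]; exact Real.sin_le_one _
    gcongr
    · linarith
    · linarith
  have hQpos : 0 < Q := lt_of_lt_of_le (by positivity) hQlow
  have habs : |vpPhi1 n m 1 0| = Q := by
    rw [hQform, abs_mul, abs_mul, abs_of_pos hQpos,
      (by rw [← Real.sqrt_sq_eq_abs, hc1sq, Real.sqrt_one] : |c1| = 1),
      (by rw [← Real.sqrt_sq_eq_abs, hc2sq, Real.sqrt_one] : |c2| = 1)]
    ring
  rw [habs]
  exact hQlow

lemma u1_bounds (γ δ : ℝ) (hγ : 0 ≤ γ) (hδ : 0 ≤ δ) (t : ℝ) (ht0 : 0 < t) (htle : t ≤ π/2) :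
    0 < jacobiU γ δ (Real.cos t) ∧ jacobiU γ δ (Real.cos t) ≤ (t^2/2)^γ * (2:ℝ)^δ := by
  have hπ := Real.pi_pos
  have hc1 : Real.cos t ≤ 1 := Real.cos_le_one t
  have hcpos : 0 ≤ Real.cos t := Real.cos_nonneg_of_mem_Icc ⟨by linarith, htle⟩
  have hdt : Real.cos (2*(t/2)) = 2 * Real.cos (t/2)^2 - 1 := Real.cos_two_mul (t/2)
  rw [show 2*(t/2) = t from by ring] at hdt
  have hpyth := Real.sin_sq_add_cos_sq (t/2)
  have hs0 : 0 < Real.sin (t/2) := Real.sin_pos_of_pos_of_lt_pi (by linarith) (by linarith)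
  have hslin : Real.sin (t/2) ≤ t/2 := Real.sin_le (by linarith)
  have h1c : 0 < 1 - Real.cos t := by nlinarith
  have hub : 1 - Real.cos t ≤ t^2/2 := by nlinarith
  have h1p : 0 < 1 + Real.cos t := by linarith
  constructor
  · exact mul_pos (Real.rpow_pos_of_pos h1c γ) (Real.rpow_pos_of_pos h1p δ)
  · rw [jacobiU]
    exact mul_le_mul (Real.rpow_le_rpow h1c.le hub hγ)
      (Real.rpow_le_rpow h1p.le (by linarith) hδ)
      (Real.rpow_nonneg h1p.le δ) (Real.rpow_nonneg (by nlinarith) γ)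

lemma chebP1_cont (j : ℕ) : Continuous (chebP1 j) := by
  unfold chebP1
  by_cases hj : j = 0
  · simp only [hj, if_pos rfl]; exact continuous_const
  · simp only [hj, if_neg hj]
    exact continuous_const.mul (Real.continuous_cos.comp
      (continuous_const.mul Real.continuous_arccos))

lemma vpPhi1_cont (n m k : ℕ) : Continuous (fun x => vpPhi1 n m k x) := by
  unfold vpPhi1
  exact continuous_const.mul (continuous_finset_sum _ fun j _ =>
    (continuous_const.mul (chebP1_cont j)).mul continuous_const)

lemma jacobiU_cont (γ δ : ℝ) (hγ : 0 ≤ γ) (hδ : 0 ≤ δ) : Continuous (jacobiU γ δ) := by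
  unfold jacobiU
  exact ((Real.continuous_rpow_const hγ).comp (continuous_const.sub continuous_id)).mul
    ((Real.continuous_rpow_const hδ).comp (continuous_const.add continuous_id))

lemma jacobiU_cos_nonneg (γ δ t : ℝ) : 0 ≤ jacobiU γ δ (Real.cos t) :=
  mul_nonneg (Real.rpow_nonneg (by nlinarith [Real.cos_le_one t]) _)
    (Real.rpow_nonneg (by nlinarith [Real.neg_one_le_cos t]) _)

lemma vpLeb_ge (γ δ : ℝ) (hγ : 0 ≤ γ) (hδ : 0 ≤ δ) (n m : ℕ) (hn1 : 1 ≤ n) :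
    |vpPhi1 n m 1 0| / jacobiU γ δ (Real.cos (chebNode1 n 1)) ≤ vpLeb γ δ n m := by
  set F : ℝ → ℝ := fun x => jacobiU γ δ x * ∑ k ∈ Finset.Icc 1 n,
      |vpPhi1 n m k x| / jacobiU γ δ (Real.cos (chebNode1 n k)) with hF
  have hFc : Continuous F := by
    apply (jacobiU_cont γ δ hγ hδ).mul
    exact continuous_finset_sum _ fun k _ => ((vpPhi1_cont n m k).abs).div_const _
  have hset : {y | ∃ x ∈ Set.Icc (-1 : ℝ) 1, y =
      jacobiU γ δ x * ∑ k ∈ Finset.Icc 1 n,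
        |vpPhi1 n m k x| / jacobiU γ δ (Real.cos (chebNode1 n k))} = F '' Set.Icc (-1) 1 := by
    ext y
    simp only [Set.mem_image, Set.mem_setOf_eq, hF, eq_comm]
  have hbdd : BddAbove {y | ∃ x ∈ Set.Icc (-1 : ℝ) 1, y =
      jacobiU γ δ x * ∑ k ∈ Finset.Icc 1 n,
        |vpPhi1 n m k x| / jacobiU γ δ (Real.cos (chebNode1 n k))} := by
    rw [hset]
    exact (isCompact_Icc.image hFc).bddAbove
  have hmem : F 0 ∈ {y | ∃ x ∈ Set.Icc (-1 : ℝ) 1, y =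
      jacobiU γ δ x * ∑ k ∈ Finset.Icc 1 n,
        |vpPhi1 n m k x| / jacobiU γ δ (Real.cos (chebNode1 n k))} :=
    ⟨0, ⟨by norm_num, by norm_num⟩, rfl⟩
  have hle : F 0 ≤ vpLeb γ δ n m := le_csSup hbdd hmem
  have hF0 : F 0 = ∑ k ∈ Finset.Icc 1 n,
      |vpPhi1 n m k 0| / jacobiU γ δ (Real.cos (chebNode1 n k)) := by
    rw [hF]
    simp only []
    rw [show jacobiU γ δ 0 = 1 from by
      rw [jacobiU]; norm_num [Real.one_rpow], one_mul]
  have hsingle : |vpPhi1 n m 1 0| / jacobiU γ δ (Real.cos (chebNode1 n 1))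
      ≤ ∑ k ∈ Finset.Icc 1 n,
        |vpPhi1 n m k 0| / jacobiU γ δ (Real.cos (chebNode1 n k)) := by
    apply Finset.single_le_sum (f := fun k => |vpPhi1 n m k 0| / jacobiU γ δ (Real.cos (chebNode1 n k)))
    · intro k _
      exact div_nonneg (abs_nonneg _) (jacobiU_cos_nonneg γ δ _)
    · exact Finset.mem_Icc.mpr ⟨le_refl 1, hn1⟩
  rw [hF0] at hle
  linarith

/-- for `γ > 1`, `δ ≥ 0` and degrees `n = 2lν`, `m = 2lμ`
(`0 < μ < ν` coprime), the weighted Lebesgue constants satisfy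
`∥V_n^m∥_u ≥ C n^{2γ-2}` with `C > 0` independent of `l`; in particular they are
unbounded. -/
theorem stmt_15 (γ δ : ℝ) (hγ : 1 < γ) (hδ : 0 ≤ δ)
    (μ ν : ℕ) (hμ : 0 < μ) (hμν : μ < ν) (hcop : Nat.Coprime μ ν) :
    ∃ C > 0,
      (∀ l : ℕ, 1 ≤ l →
        C * ((2 * l * ν : ℕ) : ℝ) ^ (2 * γ - 2) ≤ vpLeb γ δ (2 * l * ν) (2 * l * μ)) ∧
      (∀ M : ℝ, ∃ l : ℕ, 1 ≤ l ∧ M ≤ vpLeb γ δ (2 * l * ν) (2 * l * μ)) := by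
  have hπ := Real.pi_pos
  have hγ0 : (0:ℝ) ≤ γ := by linarith
  have hνpos : (0:ℝ) < ν := by exact_mod_cast (by omega : 0 < ν)
  have hμpos : (0:ℝ) < μ := by exact_mod_cast hμ
  have hμνR : (μ:ℝ) < (ν:ℝ) := by exact_mod_cast hμν
  set a : ℝ := Real.sin ((μ:ℝ)*π/(2*(ν:ℝ))) with ha'
  have ha : 0 < a := by
    rw [ha']
    apply Real.sin_pos_of_pos_of_lt_pi (by positivity)
    rw [div_lt_iff₀ (by positivity)]
    nlinarith
  set P : ℝ := (π^2/8)^γ with hP'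
  set D : ℝ := (2:ℝ)^δ with hD'
  have hPpos : 0 < P := Real.rpow_pos_of_pos (by positivity) γ
  have hDpos : 0 < D := Real.rpow_pos_of_pos (by positivity) δ
  set C : ℝ := a * ν / (2*(μ:ℝ)*D*P) with hC'
  have hCpos : 0 < C := by rw [hC']; positivity
  have hpart1 : ∀ l : ℕ, 1 ≤ l →
      C * ((2 * l * ν : ℕ) : ℝ) ^ (2 * γ - 2) ≤ vpLeb γ δ (2 * l * ν) (2 * l * μ) := by
    intro l hl
    have hlpos : (0:ℝ) < l := by exact_mod_cast hl
    set nR : ℝ := ((2 * l * ν : ℕ) : ℝ) with hnR'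
    set mR : ℝ := ((2 * l * μ : ℕ) : ℝ) with hmR'
    have hnR : nR = 2*(l:ℝ)*ν := by rw [hnR']; push_cast; ring
    have hmm : mR = 2*(l:ℝ)*μ := by rw [hmR']; push_cast; ring
    have hn0 : 0 < nR := by rw [hnR]; positivity
    have hm0 : 0 < mR := by rw [hmm]; positivity
    have hn2 : (2:ℝ) ≤ nR := by
      rw [hnR]
      nlinarith [(by exact_mod_cast hl : (1:ℝ) ≤ (l:ℝ)), (by exact_mod_cast (by omega : 1 ≤ ν) : (1:ℝ) ≤ (ν:ℝ))]
    have hn1 : 1 ≤ 2*l*ν := by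
      have h1 : 1 ≤ ν := by omega
      calc 1 = 2*1*1-1 := by norm_num
      _ ≤ 2*l*ν := by nlinarith
    -- the node
    set t : ℝ := π/(2*nR) with ht'
    have hnode : chebNode1 (2*l*ν) 1 = t := by rw [chebNode1, ht', hnR']; norm_num
    have ht0 : 0 < t := by rw [ht']; positivity
    have htle : t ≤ π/2 := by
      rw [ht']
      apply div_le_div_of_nonneg_left hπ.le (by norm_num)
      linarith
    obtain ⟨hu1pos, hu1le⟩ := u1_bounds γ δ hγ0 hδ t ht0 htle
    have key := phi_lower l μ ν (2*l*ν) (2*l*μ) hl hμ hμν rfl rfl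
    rw [← hnR', ← hmR', ← ha'] at key
    -- rpow algebra
    have hr2 : nR^((2:ℕ):ℝ) = nR^(2:ℕ) := Real.rpow_natCast nR 2
    have e0 : t^2/2 = (π^2/8) * nR^(-2:ℝ) := by
      rw [show (-2:ℝ) = -((2:ℕ):ℝ) from by norm_num, Real.rpow_neg hn0.le, hr2, ht']
      field_simp
      ring
    have e1 : (t^2/2)^γ = P * nR^((-2)*γ) := by
      rw [e0, Real.mul_rpow (by positivity) (Real.rpow_nonneg hn0.le _), hP',
        ← Real.rpow_mul hn0.le]
    have e2' : nR^(2*γ-2) * nR^((-2)*γ) * nR^2 = 1 := by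
      rw [← Real.rpow_add hn0, show 2*γ-2 + (-2)*γ = -((2:ℕ):ℝ) from by ring,
        Real.rpow_neg hn0.le, hr2]
      field_simp
    have f3 : mR * ν = nR * μ := by rw [hmm, hnR]; ring
    have hXpos : 0 < nR^(2*γ-2) := Real.rpow_pos_of_pos hn0 _
    have hYpos : 0 < nR^((-2)*γ) := Real.rpow_pos_of_pos hn0 _
    have hmain : C * nR^(2*γ-2) = (a/(2*mR*nR)) / ((t^2/2)^γ * D) := by
      rw [e1, hC', div_mul_eq_mul_div, div_div, div_eq_div_iff (by positivity) (by positivity)]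
      linear_combination (2*a*P*D*(nR^(2*γ-2))*(nR^((-2)*γ))*nR)*f3 + (2*a*P*D*(μ:ℝ))*e2'
    calc C * nR^(2*γ-2)
        = (a/(2*mR*nR)) / ((t^2/2)^γ * D) := hmain
      _ ≤ (a/(2*mR*nR)) / jacobiU γ δ (Real.cos t) := by
          apply div_le_div_of_nonneg_left (by positivity) hu1pos
          rw [hD']
          exact hu1le
      _ ≤ |vpPhi1 (2*l*ν) (2*l*μ) 1 0| / jacobiU γ δ (Real.cos t) := by
          exact (div_le_div_iff_of_pos_right hu1pos).mpr key
      _ ≤ vpLeb γ δ (2*l*ν) (2*l*μ) := by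
          rw [← hnode]
          exact vpLeb_ge γ δ hγ0 hδ (2*l*ν) (2*l*μ) hn1
  refine ⟨C, hCpos, hpart1, ?_⟩
  intro M
  have hp : (0:ℝ) < 2*γ-2 := by linarith
  set X : ℝ := (max (M/C) 1) ^ (1/(2*γ-2)) with hX'
  have hmaxpos : (0:ℝ) < max (M/C) 1 := lt_of_lt_of_le one_pos (le_max_right _ _)
  have hXpos : 0 < X := Real.rpow_pos_of_pos hmaxpos _
  set l : ℕ := ⌈X⌉₊ with hl'
  have hl1 : 1 ≤ l := by
    rw [hl']
    exact Nat.ceil_pos.mpr hXpos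
  refine ⟨l, hl1, ?_⟩
  have hlX : X ≤ (l:ℝ) := Nat.le_ceil X
  have hnl : (l:ℝ) ≤ ((2*l*ν:ℕ):ℝ) := by
    have hν1 : (1:ℝ) ≤ (ν:ℝ) := by exact_mod_cast (by omega : 1 ≤ ν)
    have hl0 : (0:ℝ) ≤ (l:ℝ) := by positivity
    push_cast
    nlinarith [mul_nonneg hl0 (by linarith : (0:ℝ) ≤ 2*(ν:ℝ)-1)]
  have hXp : X^(2*γ-2) = max (M/C) 1 := by
    rw [hX', ← Real.rpow_mul hmaxpos.le, one_div_mul_cancel hp.ne', Real.rpow_one]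
  have h1 : max (M/C) 1 ≤ ((2*l*ν:ℕ):ℝ)^(2*γ-2) := by
    rw [← hXp]
    exact Real.rpow_le_rpow hXpos.le (le_trans hlX hnl) hp.le
  have hM : M ≤ C * max (M/C) 1 := by
    have h2 : C * (M/C) ≤ C * max (M/C) 1 :=
      mul_le_mul_of_nonneg_left (le_max_left _ _) hCpos.le
    rwa [mul_div_cancel₀ _ hCpos.ne'] at h2
  calc M ≤ C * max (M/C) 1 := hM
    _ ≤ C * ((2*l*ν:ℕ):ℝ)^(2*γ-2) := mul_le_mul_of_nonneg_left h1 hCpos.le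
    _ ≤ vpLeb γ δ (2*l*ν) (2*l*μ) := hpart1 l hl1
end
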